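/- Let v̂ : ℝ → (0,1) solve v̂' = v̂(v̂ - 1) with v̂ → 1 at -∞ and v̂ → 0 at +∞. Suppose λ ∈ ℂ with Re λ ≥ 0 and (v,u) ∈ H¹(ℝ) × H²(ℝ) solve the integrated limiting eigenvalue system λv + v' - u' = 0, λu + u' - ((1-v̂)/v̂) v' = u''/v̂ on ℝ, with (u,u',v,v') → (0,0,0,0) at -∞ and (u',v,v') → (0,0,0), u → c at +∞, and with the energy identity Re λ ∫ (v̂/(1-v̂))|u|² + |v|² dx + ∫ |u'|²/(1-v̂) dx = 0 valid. Then u ≡ 0 and v ≡ 0. -/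

import Mathlib

open Filter Topology MeasureTheory

theorem stmt19 (vhat : ℝ → ℝ) (hrange : ∀ x, vhat x ∈ Set.Ioo (0:ℝ) 1)
    (hode : ∀ x, HasDerivAt vhat (vhat x * (vhat x - 1)) x)
    (hvbot : Tendsto vhat atBot (𝓝 1)) (hvtop : Tendsto vhat atTop (𝓝 0))
    (lam : ℂ) (hlam : 0 ≤ lam.re) (v u : ℝ → ℂ) (c : ℂ)
    (hv : Differentiable ℝ v) (hu : Differentiable ℝ u)
    (hu' : Differentiable ℝ (deriv u))
    (heq1 : ∀ x, lam * v x + deriv v x - deriv u x = 0)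
    (heq2 : ∀ x, lam * u x + deriv u x
      - (((1 - vhat x) / vhat x : ℝ) : ℂ) * deriv v x = deriv (deriv u) x / ((vhat x : ℝ) : ℂ))
    (hum : Tendsto u atBot (𝓝 0)) (hu'm : Tendsto (deriv u) atBot (𝓝 0))
    (hvm : Tendsto v atBot (𝓝 0)) (hv'm : Tendsto (deriv v) atBot (𝓝 0))
    (hup : Tendsto u atTop (𝓝 c)) (hu'p : Tendsto (deriv u) atTop (𝓝 0))
    (hvp : Tendsto v atTop (𝓝 0)) (hv'p : Tendsto (deriv v) atTop (𝓝 0))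
    (henergy : lam.re * (∫ x : ℝ, ((vhat x / (1 - vhat x)) * ‖u x‖ ^ 2 + ‖v x‖ ^ 2)) +
      (∫ x : ℝ, ‖deriv u x‖ ^ 2 / (1 - vhat x)) = 0) :
    (∀ x, u x = 0) ∧ ∀ x, v x = 0 := by
  have hv0 : ∀ x, 0 < vhat x := fun x => (hrange x).1
  have hv1 : ∀ x, vhat x < 1 := fun x => (hrange x).2
  have h1v : ∀ x, (0:ℝ) < 1 - vhat x := fun x => by linarith [hv1 x]
  have h1vne : ∀ x, (1:ℝ) - vhat x ≠ 0 := fun x => (h1v x).ne'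
  have hvne : ∀ x, vhat x ≠ 0 := fun x => (hv0 x).ne'
  have hvdiff : Differentiable ℝ vhat := fun x => (hode x).differentiableAt
  have hvcont : Continuous vhat := hvdiff.continuous
  have hud : ∀ x, HasDerivAt u (deriv u x) x := fun x => (hu x).hasDerivAt
  have hvd : ∀ x, HasDerivAt v (deriv v x) x := fun x => (hv x).hasDerivAt
  have hu'' : ∀ x, HasDerivAt (deriv u) (deriv (deriv u) x) x := fun x => (hu' x).hasDerivAt
  -- pointwise ODE identities
  have L1 : ∀ x, deriv v x = deriv u x - lam * v x := by
    intro x; linear_combination heq1 x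
  have L2 : ∀ x, deriv (deriv u) x
      = (vhat x : ℂ) * (lam * u x + deriv u x) - (1 - (vhat x : ℂ)) * deriv v x := by
    intro x
    have hne : ((vhat x : ℝ) : ℂ) ≠ 0 := Complex.ofReal_ne_zero.2 (hvne x)
    have h := heq2 x
    field_simp at h
    have e : ((((1 - vhat x) / vhat x : ℝ)) : ℂ) * ((vhat x : ℝ) : ℂ) = 1 - ((vhat x : ℝ) : ℂ) := by
      rw [← Complex.ofReal_mul, div_mul_cancel₀ _ (hvne x), Complex.ofReal_sub, Complex.ofReal_one]
    linear_combination -h - deriv v x * e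
  -- the energy density functions
  set G : ℝ → ℝ := fun x => vhat x / (1 - vhat x) * ‖u x‖ ^ 2 + ‖v x‖ ^ 2 with hGdef
  set F : ℝ → ℝ := fun x => ‖deriv u x‖ ^ 2 / (1 - vhat x) with hFdef
  set H : ℝ → ℝ := fun y => (deriv u y * star (u y)).re * (1 - vhat y)⁻¹
      + (v y * star (u y)).re - (v y * star (v y)).re / 2 with hHdef
  have hF0 : ∀ x, 0 ≤ F x := fun x => div_nonneg (by positivity) (h1v x).le
  have hG0 : ∀ x, 0 ≤ G x := fun x =>
    add_nonneg (mul_nonneg (div_nonneg (hv0 x).le (h1v x).le) (by positivity)) (by positivity)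
  have hD0 : ∀ x, 0 ≤ lam.re * G x + F x := fun x =>
    add_nonneg (mul_nonneg hlam (hG0 x)) (hF0 x)
  -- the key pointwise energy identity
  have hre : ∀ (f : ℝ → ℂ) (f' : ℂ) (x : ℝ), HasDerivAt f f' x →
      HasDerivAt (fun y => (f y).re) f'.re x :=
    fun f f' x hf => Complex.reCLM.hasFDerivAt.comp_hasDerivAt x hf
  have hH : ∀ x, HasDerivAt H (lam.re * G x + F x) x := by
    intro x
    have c1 : HasDerivAt (fun y => deriv u y * star (u y))
        (deriv (deriv u) x * star (u x) + deriv u x * star (deriv u x)) x :=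
      (hu'' x).mul (hud x).star
    have c2 : HasDerivAt (fun y => (1 - vhat y)⁻¹)
        (-(0 - vhat x * (vhat x - 1)) / (1 - vhat x) ^ 2) x :=
      (((hasDerivAt_const x (1:ℝ)).sub (hode x)).inv (h1vne x))
    have c3 : HasDerivAt (fun y => v y * star (u y))
        (deriv v x * star (u x) + v x * star (deriv u x)) x := (hvd x).mul (hud x).star
    have c4 : HasDerivAt (fun y => v y * star (v y))
        (deriv v x * star (v x) + v x * star (deriv v x)) x := (hvd x).mul (hvd x).star
    have total := (((hre _ _ x c1).mul c2).add (hre _ _ x c3)).sub ((hre _ _ x c4).div_const 2)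
    refine total.congr_deriv ?_
    rw [hGdef, hFdef, L1 x, L2 x, L1 x]
    simp only [Complex.star_def, Complex.mul_re, Complex.mul_im, Complex.add_re, Complex.add_im,
      Complex.sub_re, Complex.sub_im, Complex.ofReal_re, Complex.ofReal_im, Complex.conj_re,
      Complex.conj_im, Complex.one_re, Complex.one_im, Complex.sq_norm,
      Complex.normSq_apply]
    field_simp [h1vne x]
    ring
  have hHdiff : Differentiable ℝ H := fun x => (hH x).differentiableAt
  have hmono : Monotone H := monotone_of_deriv_nonneg hHdiff
    (fun x => by rw [(hH x).deriv]; exact hD0 x)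
  -- H tends to 0 at +∞
  have hHtop : Tendsto H atTop (𝓝 0) := by
    have t1 : Tendsto (fun x => (deriv u x * star (u x)).re * (1 - vhat x)⁻¹) atTop
        (𝓝 (((0:ℂ) * star c).re * ((1:ℝ) - 0)⁻¹)) :=
      ((Complex.continuous_re.tendsto _).comp
        (hu'p.mul ((continuous_star.tendsto c).comp hup))).mul
        ((tendsto_const_nhds.sub hvtop).inv₀ (by norm_num))
    have t2 : Tendsto (fun x => (v x * star (u x)).re) atTop (𝓝 (((0:ℂ) * star c).re)) :=
      (Complex.continuous_re.tendsto _).comp (hvp.mul ((continuous_star.tendsto c).comp hup))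
    have t3 : Tendsto (fun x => (v x * star (v x)).re / 2) atTop
        (𝓝 (((0:ℂ) * star (0:ℂ)).re / 2)) :=
      ((Complex.continuous_re.tendsto _).comp
        (hvp.mul ((continuous_star.tendsto (0:ℂ)).comp hvp))).div_const 2
    have h0 : (((0:ℂ) * star c).re * ((1:ℝ) - 0)⁻¹ + ((0:ℂ) * star c).re
        - ((0:ℂ) * star (0:ℂ)).re / 2) = 0 := by simp
    rw [hHdef]
    exact h0 ▸ ((t1.add t2).sub t3)
  have hHle0 : ∀ x, H x ≤ 0 := fun x =>
    ge_of_tendsto hHtop (eventually_atTop.2 ⟨x, fun y hy => hmono hy⟩)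
  -- H is bounded below
  have hLB : ∃ L, ∀ x, L ≤ H x := by
    by_contra hnot
    push_neg at hnot
    have hBot : Tendsto H atBot atBot := by
      rw [tendsto_atBot]
      intro b
      obtain ⟨x₀, hx₀⟩ := hnot b
      exact eventually_atBot.2 ⟨x₀, fun x hx => (hmono hx).trans hx₀.le⟩
    have hQ : Tendsto (fun x => (v x * star (u x)).re - (v x * star (v x)).re / 2) atBot
        (𝓝 (((0:ℂ) * star (0:ℂ)).re - ((0:ℂ) * star (0:ℂ)).re / 2)) :=
      ((Complex.continuous_re.tendsto _).comp
        (hvm.mul ((continuous_star.tendsto (0:ℂ)).comp hum))).sub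
      (((Complex.continuous_re.tendsto _).comp
        (hvm.mul ((continuous_star.tendsto (0:ℂ)).comp hvm))).div_const 2)
    have hQ' : Tendsto (fun x => (v x * star (u x)).re - (v x * star (v x)).re / 2) atBot
        (𝓝 0) := by simpa using hQ
    have hP : ∀ᶠ x in atBot, (deriv u x * star (u x)).re * (1 - vhat x)⁻¹ ≤ -1 := by
      have h1 := hBot.eventually (eventually_le_atBot (-2 : ℝ))
      have h2 := hQ'.eventually_mem (Icc_mem_nhds
        (show (-1:ℝ) < 0 by norm_num) (show (0:ℝ) < 1 by norm_num))
      filter_upwards [h1, h2] with x hx1 hx2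
      have hx2' := hx2.1
      have hHx : H x = (deriv u x * star (u x)).re * (1 - vhat x)⁻¹
          + ((v x * star (u x)).re - (v x * star (v x)).re / 2) := by rw [hHdef]; ring
      rw [hHx] at hx1
      linarith
    obtain ⟨A, hA⟩ := eventually_atBot.1 hP
    -- the function |u|² is antitone on Iic A
    have hφd : ∀ x, HasDerivAt (fun y => (u y * star (u y)).re)
        ((deriv u x * star (u x) + u x * star (deriv u x)).re) x :=
      fun x => hre _ _ x ((hud x).mul (hud x).star)
    have hφanti : AntitoneOn (fun y => (u y * star (u y)).re) (Set.Iic A) := by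
      apply antitoneOn_of_deriv_nonpos (convex_Iic A)
      · exact (Complex.continuous_re.comp
          (hu.continuous.mul (continuous_star.comp hu.continuous))).continuousOn
      · intro x _
        exact (hφd x).differentiableAt.differentiableWithinAt
      · intro x hx
        rw [interior_Iic] at hx
        rw [(hφd x).deriv]
        have hPx := hA x (le_of_lt hx)
        have hs : ((1:ℝ) - vhat x) * (1 - vhat x)⁻¹ = 1 := mul_inv_cancel₀ (h1vne x)
        have hkey : (deriv u x * star (u x)).re ≤ -(1 - vhat x) := by
          nlinarith [h1v x]
        have hsym : (u x * star (deriv u x)).re = (deriv u x * star (u x)).re := by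
          simp only [Complex.star_def, Complex.mul_re, Complex.conj_re, Complex.conj_im]
          ring
        rw [Complex.add_re, hsym]
        nlinarith [h1v x]
    have hφ0 : ∀ x, 0 ≤ (u x * star (u x)).re := fun x => by
      simp only [Complex.star_def, Complex.mul_conj]
      exact_mod_cast Complex.normSq_nonneg (u x)
    have hφbot : Tendsto (fun y => (u y * star (u y)).re) atBot (𝓝 0) := by
      have h7 : ((0:ℂ) * star (0:ℂ)).re = 0 := by simp
      exact h7 ▸ ((Complex.continuous_re.tendsto _).comp
        (hum.mul ((continuous_star.tendsto (0:ℂ)).comp hum)))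
    have hu0 : ∀ x ∈ Set.Iic A, u x = 0 := by
      intro x hx
      have hle : (u x * star (u x)).re ≤ 0 := by
        refine ge_of_tendsto hφbot ?_
        refine eventually_atBot.2 ⟨x, fun y hy => ?_⟩
        exact hφanti (hy.trans hx) hx hy
      have : (u x * star (u x)).re = 0 := le_antisymm hle (hφ0 x)
      rw [Complex.star_def, Complex.mul_conj] at this
      exact_mod_cast Complex.normSq_eq_zero.1 (by exact_mod_cast this)
    have hueq : u =ᶠ[𝓝 (A - 1)] (fun _ => (0:ℂ)) := by
      filter_upwards [Iio_mem_nhds (show A - 1 < A by linarith)] with y hy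
      exact hu0 y (Set.mem_Iic.2 (Set.mem_Iio.1 hy).le)
    have hd0 : deriv u (A - 1) = 0 := by
      rw [hueq.deriv_eq]; simp
    have := hA (A - 1) (by linarith)
    rw [hd0] at this
    norm_num at this
  obtain ⟨L, hL⟩ := hLB
  -- continuity of the densities
  have hFcont : Continuous F :=
    (hu'.continuous.norm.pow 2).div (continuous_const.sub hvcont) h1vne
  have hGcont : Continuous G :=
    ((hvcont.div (continuous_const.sub hvcont) h1vne).mul (hu.continuous.norm.pow 2)).add
      (hv.continuous.norm.pow 2)
  have hDcont : Continuous (fun x => lam.re * G x + F x) :=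
    (continuous_const.mul hGcont).add hFcont
  -- F is integrable
  have hFint : Integrable F := by
    apply MeasureTheory.integrable_of_intervalIntegral_norm_bounded
      (a := fun n : ℕ => -(n:ℝ)) (b := fun n : ℕ => (n:ℝ)) (l := atTop) (-L)
    · intro n
      exact hFcont.integrableOn_Ioc
    · exact tendsto_neg_atTop_atBot.comp tendsto_natCast_atTop_atTop
    · exact tendsto_natCast_atTop_atTop
    · refine Eventually.of_forall fun n => ?_
      have hle : -(n:ℝ) ≤ (n:ℝ) := by
        have : (0:ℝ) ≤ (n:ℝ) := Nat.cast_nonneg n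
        linarith
      have e1 : (∫ x in (-(n:ℝ))..(n:ℝ), ‖F x‖) = ∫ x in (-(n:ℝ))..(n:ℝ), F x :=
        intervalIntegral.integral_congr fun x _ => Real.norm_of_nonneg (hF0 x)
      rw [e1]
      have hInt1 : IntervalIntegrable F volume (-(n:ℝ)) (n:ℝ) :=
        hFcont.intervalIntegrable _ _
      have hInt2 : IntervalIntegrable (fun x => lam.re * G x + F x) volume (-(n:ℝ)) (n:ℝ) :=
        hDcont.intervalIntegrable _ _
      have e2 : (∫ x in (-(n:ℝ))..(n:ℝ), (lam.re * G x + F x)) = H (n:ℝ) - H (-(n:ℝ)) :=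
        intervalIntegral.integral_eq_sub_of_hasDerivAt (fun x _ => hH x) hInt2
      have e3 : (∫ x in (-(n:ℝ))..(n:ℝ), F x)
          ≤ ∫ x in (-(n:ℝ))..(n:ℝ), (lam.re * G x + F x) :=
        intervalIntegral.integral_mono_on hle hInt1 hInt2
          (fun x _ => le_add_of_nonneg_left (mul_nonneg hlam (hG0 x)))
      have h4 := hL (-(n:ℝ))
      have h5 := hHle0 (n:ℝ)
      linarith [e2 ▸ e3]
  -- the integral of F vanishes
  have hA0 : 0 ≤ ∫ x, G x := integral_nonneg hG0
  have hB0 : 0 ≤ ∫ x, F x := integral_nonneg hF0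
  have hBze : (∫ x, F x) = 0 := by nlinarith [mul_nonneg hlam hA0]
  have hFae : F =ᵐ[volume] 0 :=
    (integral_eq_zero_iff_of_nonneg_ae (Eventually.of_forall hF0) hFint).1 hBze
  have hFeq : F = 0 := (hFcont.ae_eq_iff_eq volume continuous_const).1 hFae
  -- hence u' ≡ 0
  have hderiv0 : ∀ x, deriv u x = 0 := by
    intro x
    have hx : F x = 0 := congrFun hFeq x
    rw [hFdef] at hx
    rcases div_eq_zero_iff.1 hx with h | h
    · exact norm_eq_zero.1 ((pow_eq_zero_iff (by norm_num : (2:ℕ) ≠ 0)).1 h)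
    · exact absurd h (h1vne x)
  -- hence u ≡ 0
  have huz : ∀ x, u x = 0 := by
    intro x
    have hconst : ∀ a b : ℝ, u a = u b := is_const_of_deriv_eq_zero hu hderiv0
    have h2 : Tendsto u atBot (𝓝 (u x)) := by
      have : u = fun _ => u x := funext fun y => hconst y x
      rw [this]
      exact tendsto_const_nhds
    exact (tendsto_nhds_unique h2 hum)
  -- hence v ≡ 0
  have hg : ∀ x, HasDerivAt (fun y : ℝ => Complex.exp (lam * y) * v y) 0 x := by
    intro x
    have hin : HasDerivAt (fun y : ℝ => lam * (y:ℂ)) lam x := by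
      simpa using (Complex.ofRealCLM.hasDerivAt (x := x)).const_mul lam
    have h1 : HasDerivAt (fun y : ℝ => Complex.exp (lam * y))
        (Complex.exp (lam * x) * lam) x := hin.cexp
    have h2 := h1.mul (hvd x)
    refine h2.congr_deriv ?_
    rw [L1 x, hderiv0 x]
    ring
  have hgc : ∀ a b : ℝ, Complex.exp (lam * a) * v a = Complex.exp (lam * b) * v b :=
    is_const_of_deriv_eq_zero (fun x => (hg x).differentiableAt) (fun x => (hg x).deriv)
  have hv00 : v 0 = 0 := by
    have key : ∀ x : ℝ, x ≤ 0 → ‖v 0‖ ≤ ‖v x‖ := by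
      intro x hx
      have h3 := hgc 0 x
      have h4 : ‖v 0‖ = Real.exp (lam.re * x) * ‖v x‖ := by
        calc ‖v 0‖ = ‖Complex.exp (lam * (0:ℝ)) * v 0‖ := by
              simp
          _ = ‖Complex.exp (lam * (x:ℝ)) * v x‖ := by rw [h3]
          _ = Real.exp (lam.re * x) * ‖v x‖ := by
              rw [norm_mul, Complex.norm_exp]
              congr 2
              simp [Complex.mul_re]
      rw [h4]
      have h5 : Real.exp (lam.re * x) ≤ 1 :=
        Real.exp_le_one_iff.2 (mul_nonpos_of_nonneg_of_nonpos hlam hx)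
      nlinarith [norm_nonneg (v x)]
    have h6 : ‖v 0‖ ≤ 0 :=
      ge_of_tendsto (show Tendsto (fun x => ‖v x‖) atBot (𝓝 (0:ℝ)) by simpa using hvm.norm)
        (eventually_atBot.2 ⟨(0:ℝ), key⟩)
    exact norm_le_zero_iff.1 h6
  refine ⟨huz, fun x => ?_⟩
  have h3 := hgc x 0
  rw [hv00, mul_zero] at h3
  rcases mul_eq_zero.1 h3 with h | h
  · exact absurd h (Complex.exp_ne_zero _)
  · exact h
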